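/- Assume ker(τ) is dense in H. Then there exists a densely defined self-adjoint operator A_Λ in H (a linear map defined on a dense subspace dom(A_Λ) ⊆ H which coincides with its adjoint) which is a self-adjoint extension of the restriction of A₀ to ker(τ) and whose resolvent at every point of Z_Λ is R^Λ: (i) every u ∈ dom(A₀) with τu = 0 satisfies u ∈ dom(A_Λ) and A_Λu = A₀u; (ii) for every z ∈ Z_Λ and every v ∈ H, R^Λ_z v ∈ dom(A_Λ) and z·R^Λ_z v − A_Λ R^Λ_z v = v; (iii) for every z ∈ Z_Λ and every u ∈ dom(A_Λ), R^Λ_z(z·u − A_Λ u) = u. -/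

import Mathlib

local notation "⟪" x ", " y "⟫" => @inner ℂ _ _ x y


open ContinuousLinearMap in
set_option maxHeartbeats 2000000 in
/-- Theorem 2.4 of the paper (Kreĭn-type resolvent formula): assuming `ker τ` dense in `H`,
there exists a densely defined self-adjoint operator `A_Λ` in `H` which extends the
restriction of `A₀` to `ker τ` and whose resolvent at every `z ∈ Z_Λ` is
`R^Λ_z = R⁰_z + G_z Λ_z (τ R⁰_z)`, where `G_z = (τ R⁰_{z̄})*` and `τ R⁰_z = T z`. -/
theorem statement0
    {H 𝔥 : Type*}
    [NormedAddCommGroup H] [InnerProductSpace ℂ H] [CompleteSpace H]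
    [NormedAddCommGroup 𝔥] [InnerProductSpace ℂ 𝔥] [CompleteSpace 𝔥]
    (A0 : H →ₗ.[ℂ] H)
    (hA0dense : Dense (A0.domain : Set H))
    (hA0sa : A0.adjoint = A0)
    (Z : Set ℂ) (hZne : Z.Nonempty) (hZconj : ∀ z ∈ Z, (starRingEnd ℂ) z ∈ Z)
    (R0 : ℂ → H →L[ℂ] H)
    (hRdom : ∀ z, z ∈ Z → ∀ v : H, R0 z v ∈ A0.domain)
    (hRleft : ∀ z ∈ Z, ∀ u : A0.domain, R0 z (z • (u : H) - A0 u) = u)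
    (hRright : ∀ z, ∀ hz : z ∈ Z, ∀ v : H,
      z • R0 z v - A0 ⟨R0 z v, hRdom z hz v⟩ = v)
    (τ : A0.domain →ₗ[ℂ] 𝔥)
    (hτsurj : Function.Surjective τ)
    (hτbdd : ∃ C : ℝ, 0 < C ∧ ∀ u : A0.domain, ‖τ u‖ ≤ C * (‖(u : H)‖ + ‖A0 u‖))
    (T : ℂ → H →L[ℂ] 𝔥)
    (hT : ∀ z, ∀ hz : z ∈ Z, ∀ v : H, T z v = τ ⟨R0 z v, hRdom z hz v⟩)
    (hker : Dense ((fun u : A0.domain => (u : H)) '' {u | τ u = 0}))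
    (ZΛ : Set ℂ) (hZΛsub : ZΛ ⊆ Z) (hZΛne : ZΛ.Nonempty)
    (hZΛconj : ∀ z ∈ ZΛ, (starRingEnd ℂ) z ∈ ZΛ)
    (Λ : ℂ → 𝔥 →L[ℂ] 𝔥)
    (hΛadj : ∀ z ∈ ZΛ, adjoint (Λ z) = Λ ((starRingEnd ℂ) z))
    (hΛres : ∀ z ∈ ZΛ, ∀ w ∈ ZΛ,
      Λ w - Λ z
        = (z - w) • (Λ w
            ∘L adjoint (adjoint (T ((starRingEnd ℂ) ((starRingEnd ℂ) w))))
            ∘L adjoint (T ((starRingEnd ℂ) z)) ∘L Λ z))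
    (RΛ : ℂ → H →L[ℂ] H)
    (hRΛ : ∀ z, RΛ z = R0 z + adjoint (T ((starRingEnd ℂ) z)) ∘L Λ z ∘L T z) :
    ∃ AΛ : H →ₗ.[ℂ] H,
      Dense (AΛ.domain : Set H)
      ∧ AΛ.adjoint = AΛ
      ∧ (∀ u : A0.domain, τ u = 0 →
          ∃ hu : (u : H) ∈ AΛ.domain, AΛ ⟨(u : H), hu⟩ = A0 u)
      ∧ (∀ z, z ∈ ZΛ → ∀ v : H,
          ∃ hv : RΛ z v ∈ AΛ.domain, z • RΛ z v - AΛ ⟨RΛ z v, hv⟩ = v)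
      ∧ (∀ z ∈ ZΛ, ∀ u : AΛ.domain, RΛ z (z • (u : H) - AΛ u) = u) := by
  classical
  obtain ⟨z₀, hz₀⟩ := hZΛne
  have memZ : ∀ z ∈ ZΛ, z ∈ Z := fun z hz => hZΛsub hz
  -- symmetry of A0
  have hsym : ∀ x y : A0.domain, ⟪(A0 x : H), (y : H)⟫ = ⟪(x : H), A0 y⟫ := by
    have h := LinearPMap.adjoint_isFormalAdjoint (T := A0) hA0dense
    rw [hA0sa] at h
    exact fun x y => h x y
  -- R0 z adjoint relation, pointwise
  have hR0inner : ∀ z, z ∈ Z → ∀ u v : H,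
      ⟪R0 z u, v⟫ = ⟪u, R0 ((starRingEnd ℂ) z) v⟫ := by
    intro z hz u v
    have hz' := hZconj z hz
    have ha : R0 z u ∈ A0.domain := hRdom z hz u
    have hb : R0 ((starRingEnd ℂ) z) v ∈ A0.domain := hRdom _ hz' v
    have hu : z • R0 z u - A0 ⟨R0 z u, ha⟩ = u := hRright z hz u
    have hv : (starRingEnd ℂ) z • R0 ((starRingEnd ℂ) z) v
        - A0 ⟨R0 ((starRingEnd ℂ) z) v, hb⟩ = v := hRright _ hz' v
    calc ⟪R0 z u, v⟫
        = ⟪R0 z u, (starRingEnd ℂ) z • R0 ((starRingEnd ℂ) z) v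
            - A0 ⟨R0 ((starRingEnd ℂ) z) v, hb⟩⟫ := by rw [hv]
      _ = ⟪z • R0 z u - A0 ⟨R0 z u, ha⟩, R0 ((starRingEnd ℂ) z) v⟫ := by
          rw [inner_sub_right, inner_sub_left, inner_smul_right, inner_smul_left,
            hsym ⟨R0 z u, ha⟩ ⟨R0 ((starRingEnd ℂ) z) v, hb⟩]
      _ = ⟪u, R0 ((starRingEnd ℂ) z) v⟫ := by rw [hu]
  -- R0 resolvent identity
  have hres0 : ∀ z, z ∈ Z → ∀ w, w ∈ Z → ∀ v : H,
      R0 w v - R0 z v = (z - w) • R0 w (R0 z v) := by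
    intro z hz w hw v
    have ha : R0 z v ∈ A0.domain := hRdom z hz v
    have h1 : R0 w (z • R0 z v - A0 ⟨R0 z v, ha⟩) = R0 w v := by
      rw [hRright z hz v]
    have h2 : R0 w (w • R0 z v - A0 ⟨R0 z v, ha⟩) = R0 z v :=
      hRleft w hw ⟨R0 z v, ha⟩
    have h3 : (z - w) • R0 z v
        = (z • R0 z v - A0 ⟨R0 z v, ha⟩) - (w • R0 z v - A0 ⟨R0 z v, ha⟩) := by
      rw [sub_smul]; abel
    rw [← map_smul, h3, map_sub, h1, h2]
  -- T difference identity
  have hTdiff : ∀ z, z ∈ Z → ∀ w, w ∈ Z → ∀ v : H,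
      T w v - T z v = (z - w) • T w (R0 z v) := by
    intro z hz w hw v
    rw [hT w hw v, hT z hz v, hT w hw (R0 z v), ← map_sub, ← map_smul]
    congr 1
    exact Subtype.ext (by
      push_cast
      exact hres0 z hz w hw v)
  -- G difference identity, pointwise
  have hG : ∀ z, z ∈ ZΛ → ∀ w, w ∈ ZΛ → ∀ ξ : 𝔥,
      (z - w) • R0 w (adjoint (T ((starRingEnd ℂ) z)) ξ)
        = adjoint (T ((starRingEnd ℂ) w)) ξ - adjoint (T ((starRingEnd ℂ) z)) ξ := by
    intro z hz w hw ξ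
    have hzZ := memZ z hz
    have hwZ := memZ w hw
    have hz' := hZconj z hzZ
    have hw' := hZconj w hwZ
    apply ext_inner_left ℂ
    intro a
    have e1 : ⟪a, R0 w (adjoint (T ((starRingEnd ℂ) z)) ξ)⟫
        = ⟪R0 ((starRingEnd ℂ) w) a, adjoint (T ((starRingEnd ℂ) z)) ξ⟫ := by
      have := hR0inner _ hw' a (adjoint (T ((starRingEnd ℂ) z)) ξ)
      simp only [Complex.conj_conj] at this
      exact this.symm
    have e2 : T ((starRingEnd ℂ) w) a - T ((starRingEnd ℂ) z) a
        = ((starRingEnd ℂ) z - (starRingEnd ℂ) w)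
            • T ((starRingEnd ℂ) z) (R0 ((starRingEnd ℂ) w) a) := by
      have := hTdiff _ hw' _ hz' a
      linear_combination (norm := module) -this
    rw [inner_smul_right, e1, adjoint_inner_right, inner_sub_right,
      adjoint_inner_right, adjoint_inner_right]
    rw [show (z - w) * ⟪T ((starRingEnd ℂ) z) (R0 ((starRingEnd ℂ) w) a), ξ⟫
        = ⟪((starRingEnd ℂ) z - (starRingEnd ℂ) w)
            • T ((starRingEnd ℂ) z) (R0 ((starRingEnd ℂ) w) a), ξ⟫ by
      rw [inner_smul_left]; simp]
    rw [show ((starRingEnd ℂ) z - (starRingEnd ℂ) w)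
            • T ((starRingEnd ℂ) z) (R0 ((starRingEnd ℂ) w) a)
        = T ((starRingEnd ℂ) w) a - T ((starRingEnd ℂ) z) a by
      rw [e2]]
    rw [inner_sub_left]
  -- Λ resolvent identity, pointwise
  have hΛ' : ∀ z, z ∈ ZΛ → ∀ w, w ∈ ZΛ → ∀ η : 𝔥,
      Λ w η - Λ z η
        = (z - w) • Λ w (T w (adjoint (T ((starRingEnd ℂ) z)) (Λ z η))) := by
    intro z hz w hw η
    have := congrArg (fun B : 𝔥 →L[ℂ] 𝔥 => B η) (hΛres z hz w hw)
    simpa [ContinuousLinearMap.adjoint_adjoint, Complex.conj_conj] using this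
  -- RΛ resolvent identity
  have hresΛ : ∀ z, z ∈ ZΛ → ∀ w, w ∈ ZΛ → ∀ v : H,
      RΛ w v - RΛ z v = (z - w) • RΛ w (RΛ z v) := by
    intro z hz w hw v
    have hzZ := memZ z hz
    have hwZ := memZ w hw
    set Gz := adjoint (T ((starRingEnd ℂ) z)) with hGz
    set Gw := adjoint (T ((starRingEnd ℂ) w)) with hGw
    set ξ := Λ z (T z v) with hξ
    have e1 := hres0 z hzZ w hwZ v
    have e2 : (z - w) • R0 w (Gz ξ) = Gw ξ - Gz ξ := hG z hz w hw ξ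
    have e3 : (z - w) • Gw (Λ w (T w (R0 z v)))
        = Gw (Λ w (T w v)) - Gw (Λ w (T z v)) := by
      calc (z - w) • Gw (Λ w (T w (R0 z v)))
          = Gw (Λ w ((z - w) • T w (R0 z v))) := by simp
        _ = Gw (Λ w (T w v - T z v)) := by rw [← hTdiff z hzZ w hwZ v]
        _ = Gw (Λ w (T w v)) - Gw (Λ w (T z v)) := by rw [map_sub, map_sub]
    have e4 : (z - w) • Gw (Λ w (T w (Gz ξ)))
        = Gw (Λ w (T z v)) - Gw ξ := by
      calc (z - w) • Gw (Λ w (T w (Gz ξ)))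
          = Gw ((z - w) • Λ w (T w (Gz ξ))) := by simp
        _ = Gw (Λ w (T z v) - Λ z (T z v)) := by
            rw [hξ, ← hΛ' z hz w hw (T z v)]
        _ = Gw (Λ w (T z v)) - Gw ξ := by rw [map_sub, hξ]
    rw [hRΛ w, hRΛ z]
    simp only [ContinuousLinearMap.add_apply, ContinuousLinearMap.comp_apply,
      map_add, smul_add, ← hGz, ← hGw, ← hξ]
    rw [e2, e3, e4, ← e1]
    abel
  -- RΛ adjoint relation, pointwise
  have hadjΛ : ∀ z, z ∈ ZΛ → ∀ u v : H,
      ⟪RΛ z u, v⟫ = ⟪u, RΛ ((starRingEnd ℂ) z) v⟫ := by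
    intro z hz u v
    have hzZ := memZ z hz
    rw [hRΛ z, hRΛ ((starRingEnd ℂ) z)]
    simp only [ContinuousLinearMap.add_apply, ContinuousLinearMap.comp_apply,
      inner_add_left, inner_add_right, Complex.conj_conj]
    congr 1
    · exact hR0inner z hzZ u v
    · rw [adjoint_inner_left, adjoint_inner_right]
      rw [show ⟪Λ z (T z u), T ((starRingEnd ℂ) z) v⟫
          = ⟪T z u, adjoint (Λ z) (T ((starRingEnd ℂ) z) v)⟫ from
        (adjoint_inner_right _ _ _).symm]
      rw [hΛadj z hz]
  -- RΛ maps (z u - A0 u) back to u for u ∈ ker τ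
  have hkerRΛ : ∀ u : A0.domain, τ u = 0 → ∀ z, z ∈ ZΛ →
      RΛ z (z • (u : H) - A0 u) = (u : H) := by
    intro u hτu z hz
    have hzZ := memZ z hz
    rw [hRΛ z]
    simp only [ContinuousLinearMap.add_apply, ContinuousLinearMap.comp_apply]
    have h1 : R0 z (z • (u : H) - A0 u) = (u : H) := hRleft z hzZ u
    have h2 : T z (z • (u : H) - A0 u) = 0 := by
      rw [hT z hzZ]
      have : (⟨R0 z (z • (u : H) - A0 u), hRdom z hzZ _⟩ : A0.domain) = u :=
        Subtype.ext h1
      rw [this, hτu]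
    rw [h1, h2, map_zero, map_zero, add_zero]
  -- the domain of AΛ
  set dom : Submodule ℂ H := LinearMap.range ((RΛ z₀ : H →ₗ[ℂ] H)) with hdom
  have hmemdom : ∀ v : H, RΛ z₀ v ∈ dom := fun v => ⟨v, rfl⟩
  have hdense_dom : Dense (dom : Set H) := by
    refine Dense.mono ?_ hker
    rintro x ⟨u, hu, rfl⟩
    exact ⟨z₀ • (u : H) - A0 u, hkerRΛ u hu z₀ hz₀⟩
  -- injectivity of RΛ z₀
  have hinj : Function.Injective ((RΛ z₀ : H →ₗ[ℂ] H)) := by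
    have h0 : ∀ v : H, RΛ z₀ v = 0 → v = 0 := by
      intro v hv
      have hz₀' := hZΛconj z₀ hz₀
      have hS : RΛ ((starRingEnd ℂ) z₀) v = 0 := by
        have h := hresΛ z₀ hz₀ ((starRingEnd ℂ) z₀) hz₀' v
        rw [hv] at h
        simpa using h
      have hperp : ∀ x ∈ (dom : Set H), ⟪x, v⟫ = 0 := by
        rintro x ⟨a, rfl⟩
        show ⟪RΛ z₀ a, v⟫ = 0
        rw [hadjΛ z₀ hz₀ a v, hS, inner_zero_right]
      have hc : IsClosed {x : H | ⟪x, v⟫ = 0} :=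
        isClosed_eq (continuous_id.inner continuous_const) continuous_const
      have hall : ∀ x : H, ⟪x, v⟫ = 0 := fun x =>
        hc.closure_subset_iff.mpr hperp (hdense_dom x)
      exact ext_inner_left ℂ fun w => by rw [hall w, inner_zero_right]
    intro v1 v2 h
    have heq : RΛ z₀ v1 = RΛ z₀ v2 := h
    have hsub : RΛ z₀ (v1 - v2) = 0 := by rw [map_sub, heq, sub_self]
    exact sub_eq_zero.mp (h0 _ hsub)
  -- the operator AΛ
  set e : H ≃ₗ[ℂ] dom := LinearEquiv.ofInjective ((RΛ z₀ : H →ₗ[ℂ] H)) hinj with he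
  set AΛ : H →ₗ.[ℂ] H :=
    ⟨dom, z₀ • dom.subtype - (e.symm : dom →ₗ[ℂ] H)⟩ with hAΛ
  have hdomAΛ : AΛ.domain = dom := rfl
  -- the fundamental application formula
  have hApply : ∀ (x : H) (hx : x ∈ dom) (v : H), RΛ z₀ v = x →
      AΛ ⟨x, hx⟩ = z₀ • x - v := by
    intro x hx v hvx
    show (z₀ • dom.subtype - (e.symm : dom →ₗ[ℂ] H)) ⟨x, hx⟩ = z₀ • x - v
    have hxe : (⟨x, hx⟩ : dom) = e v := Subtype.ext (by
      rw [he]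
      rw [LinearEquiv.ofInjective_apply]
      exact hvx.symm)
    have hs : ((e.symm : dom →ₗ[ℂ] H)) ⟨x, hx⟩ = v := by
      rw [LinearEquiv.coe_coe, hxe, LinearEquiv.symm_apply_apply]
    rw [LinearMap.sub_apply, LinearMap.smul_apply, hs]
    rfl
  -- membership of RΛ z v in dom for any z ∈ ZΛ
  have hmemz : ∀ z, z ∈ ZΛ → ∀ v : H,
      RΛ z₀ (v + (z₀ - z) • RΛ z v) = RΛ z v := by
    intro z hz v
    have h := hresΛ z hz z₀ hz₀ v
    -- RΛ z₀ v - RΛ z v = (z - z₀) • RΛ z₀ (RΛ z v)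
    rw [map_add, map_smul]
    linear_combination (norm := module) h
  -- property (ii)
  have prop2 : ∀ z, z ∈ ZΛ → ∀ v : H,
      ∃ hv : RΛ z v ∈ AΛ.domain, z • RΛ z v - AΛ ⟨RΛ z v, hv⟩ = v := by
    intro z hz v
    have hmem : RΛ z v ∈ AΛ.domain := ⟨v + (z₀ - z) • RΛ z v, hmemz z hz v⟩
    refine ⟨hmem, ?_⟩
    rw [hApply (RΛ z v) _ (v + (z₀ - z) • RΛ z v) (hmemz z hz v)]
    module
  -- property (iii)
  have prop3 : ∀ z ∈ ZΛ, ∀ u : AΛ.domain, RΛ z (z • (u : H) - AΛ u) = (u : H) := by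
    intro z hz u
    obtain ⟨w, hw⟩ := u.2
    have hw' : RΛ z₀ w = (u : H) := hw
    have hAu : AΛ u = z₀ • (u : H) - w := hApply (u : H) u.2 w hw'
    rw [hAu]
    have hrw : z • (u : H) - (z₀ • (u : H) - w) = w + (z - z₀) • (u : H) := by
      module
    rw [hrw, map_add, map_smul, ← hw']
    have h := hresΛ z₀ hz₀ z hz w
    -- RΛ z w - RΛ z₀ w = (z₀ - z) • RΛ z (RΛ z₀ w)
    linear_combination (norm := module) h
  -- property (i)
  have prop1 : ∀ u : A0.domain, τ u = 0 →
      ∃ hu : (u : H) ∈ AΛ.domain, AΛ ⟨(u : H), hu⟩ = A0 u := by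
    intro u hτu
    have hmem : (u : H) ∈ dom :=
      ⟨z₀ • (u : H) - A0 u, hkerRΛ u hτu z₀ hz₀⟩
    refine ⟨hmem, ?_⟩
    rw [hApply (u : H) hmem (z₀ • (u : H) - A0 u) (hkerRΛ u hτu z₀ hz₀)]
    exact sub_sub_cancel _ _
  -- symmetry of AΛ
  have hform : AΛ.IsFormalAdjoint AΛ := by
    intro x y
    have hz₀' := hZΛconj z₀ hz₀
    obtain ⟨a, ha⟩ : ∃ a : H, a = z₀ • (x : H) - AΛ x := ⟨_, rfl⟩
    obtain ⟨b, hb⟩ : ∃ b : H, b = (starRingEnd ℂ) z₀ • (y : H) - AΛ y := ⟨_, rfl⟩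
    have hxa : RΛ z₀ a = (x : H) := by rw [ha]; exact prop3 z₀ hz₀ x
    have hyb : RΛ ((starRingEnd ℂ) z₀) b = (y : H) := by rw [hb]; exact prop3 _ hz₀' y
    have h1 : AΛ x = z₀ • (x : H) - a := by rw [ha]; exact (sub_sub_cancel _ _).symm
    have h2 : AΛ y = (starRingEnd ℂ) z₀ • (y : H) - b := by
      rw [hb]; exact (sub_sub_cancel _ _).symm
    have key : ⟪a, (y : H)⟫ = ⟪(x : H), b⟫ := by
      rw [← hyb, ← hxa]
      have := hadjΛ z₀ hz₀ a b
      rw [hxa] at this ⊢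
      exact this.symm
    have lhs : ⟪AΛ x, (y : H)⟫
        = (starRingEnd ℂ) z₀ * ⟪(x : H), (y : H)⟫ - ⟪a, (y : H)⟫ := by
      rw [h1, inner_sub_left, inner_smul_left]
    have rhs : ⟪(x : H), AΛ y⟫
        = (starRingEnd ℂ) z₀ * ⟪(x : H), (y : H)⟫ - ⟪(x : H), b⟫ := by
      rw [h2, inner_sub_right, inner_smul_right]
    rw [lhs, rhs, key]
  have hle : AΛ ≤ AΛ.adjoint :=
    LinearPMap.IsFormalAdjoint.le_adjoint hdense_dom hform
  -- the adjoint domain is contained in dom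
  have hdomle : AΛ.adjoint.domain ≤ AΛ.domain := by
    intro v hv
    have hz₀' := hZΛconj z₀ hz₀
    obtain ⟨w, hwdef⟩ : ∃ w : H, w = AΛ.adjoint ⟨v, hv⟩ := ⟨_, rfl⟩
    have hw : ∀ x : AΛ.domain, ⟪w, (x : H)⟫ = ⟪v, AΛ x⟫ := fun x => by
      rw [hwdef]
      exact LinearPMap.adjoint_isFormalAdjoint hdense_dom ⟨v, hv⟩ x
    obtain ⟨c, hc⟩ : ∃ c : H, c = (starRingEnd ℂ) z₀ • v - w := ⟨_, rfl⟩
    have hclaim : v = RΛ ((starRingEnd ℂ) z₀) c := by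
      apply ext_inner_right ℂ
      intro d
      have hxmem : RΛ z₀ d ∈ dom := hmemdom d
      have hAx : AΛ ⟨RΛ z₀ d, hxmem⟩ = z₀ • RΛ z₀ d - d := hApply _ hxmem d rfl
      have h3 := hw ⟨RΛ z₀ d, hxmem⟩
      rw [hAx, inner_sub_right, inner_smul_right] at h3
      -- ⟪w, RΛ z₀ d⟫ = z₀ * ⟪v, RΛ z₀ d⟫ - ⟪v, d⟫
      have h4 : ⟪v, d⟫ = ⟪c, RΛ z₀ d⟫ := by
        rw [hc, inner_sub_left, inner_smul_left]
        simp only [Complex.conj_conj]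
        linear_combination h3
      rw [h4]
      have h5 := hadjΛ _ hz₀' c d
      simp only [Complex.conj_conj] at h5
      exact h5.symm
    have : RΛ ((starRingEnd ℂ) z₀) c ∈ dom :=
      ⟨c + (z₀ - (starRingEnd ℂ) z₀) • RΛ ((starRingEnd ℂ) z₀) c, hmemz _ hz₀' c⟩
    rw [hdomAΛ, hclaim]
    exact this
  have hsa : AΛ.adjoint = AΛ :=
    (LinearPMap.eq_of_le_of_domain_eq hle (le_antisymm hle.1 hdomle)).symm
  exact ⟨AΛ, hdense_dom, hsa, prop1, prop2, prop3⟩
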